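/- Let A be a ring, M a finitely presented A-module, and N any A-module. Then the set of weakly associated primes of Hom_A(M, N) equals the intersection of the support of M with the set of weakly associated primes of N: Ass_A(Hom_A(M,N)) = Supp(M) ∩ Ass_A(N). -/

import Mathlib

open CategoryTheory

/-- The weakly associated primes of a module: primes minimal over the annihilator
of some element. -/
def weakAssPrimes (A : Type) [CommRing A] (M : Type) [AddCommGroup M] [Module A M] :
    Set (PrimeSpectrum A) :=
  {p | ∃ x : M, p.asIdeal ∈ (Submodule.span A {x}).annihilator.minimalPrimes}

section LocalLemma

variable {R : Type*} [CommRing R]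

/-- If `J` is a proper ideal such that every element of `R` is a unit or lies in `√J`,
and `M` is a nontrivial finitely presented module, then there is a nonzero map `M → R/J`. -/
lemma exists_nonzero_hom_quotient (M : Type*) [AddCommGroup M] [Module R M]
    [Module.FinitePresentation R M] [Nontrivial M] (J : Ideal R) (hJ : J ≠ ⊤)
    (hrad : ∀ a : R, IsUnit a ∨ a ∈ J.radical) :
    ∃ φ : M →ₗ[R] R ⧸ J, φ ≠ 0 := by
  classical
  obtain ⟨n, π, hπ⟩ := Module.Finite.exists_fin' R M
  induction n with
  | zero =>
    exfalso
    obtain ⟨x, y, hxy⟩ := exists_pair_ne M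
    obtain ⟨a, rfl⟩ := hπ x
    obtain ⟨b, rfl⟩ := hπ y
    exact hxy (congrArg π (Subsingleton.elim a b))
  | succ m IH =>
    have hrep : ∀ w : Fin (m + 1) → R, π w = ∑ k, w k • π (Pi.single k 1) := by
      intro w
      conv_lhs => rw [show w = ∑ k, Pi.single k (w k) from (Finset.univ_sum_single w).symm]
      rw [map_sum]
      refine Finset.sum_congr rfl fun k _ => ?_
      have hsingle : w k • (Pi.single k (1 : R) : Fin (m + 1) → R) = Pi.single k (w k) := by
        rw [← Pi.single_smul, smul_eq_mul, mul_one]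
      rw [← hsingle, map_smul]
    by_cases hv : ∃ v ∈ LinearMap.ker π, ∃ i, IsUnit (v i)
    · obtain ⟨v, hvker, i, hu⟩ := hv
      set σ : (Fin m → R) →ₗ[R] M :=
        Fintype.linearCombination R (fun j : Fin m => π (Pi.single (i.succAbove j) 1)) with hσ
      set T : Submodule R M :=
        Submodule.span R (Set.range fun j : Fin m => π (Pi.single (i.succAbove j) 1)) with hT
      have key1 : ∀ k, π (Pi.single k 1) ∈ T := by
        have h0 : (0 : M) = v i • π (Pi.single i 1)
            + ∑ j : Fin m, v (i.succAbove j) • π (Pi.single (i.succAbove j) 1) := by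
          have := hrep v
          rw [LinearMap.mem_ker.mp hvker] at this
          rw [this, Fin.sum_univ_succAbove (fun k => v k • π (Pi.single k 1)) i]
        have hvi : v i • π (Pi.single i 1) ∈ T := by
          have : v i • π (Pi.single i 1) =
              -∑ j : Fin m, v (i.succAbove j) • π (Pi.single (i.succAbove j) 1) := by
            rw [eq_neg_iff_add_eq_zero]; exact h0.symm
          rw [this]
          exact neg_mem (Submodule.sum_mem _ fun j _ =>
            Submodule.smul_mem _ _ (Submodule.subset_span ⟨j, rfl⟩))
        have hi : π (Pi.single i 1) ∈ T := by
          have : π (Pi.single i 1) = (↑hu.unit⁻¹ : R) • (v i • π (Pi.single i 1)) := by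
            rw [smul_smul, IsUnit.val_inv_mul, one_smul]
          rw [this]
          exact Submodule.smul_mem _ _ hvi
        intro k
        rcases eq_or_ne k i with rfl | hk
        · exact hi
        · obtain ⟨j, rfl⟩ := Fin.exists_succAbove_eq hk
          exact Submodule.subset_span ⟨j, rfl⟩
      have hσs : Function.Surjective σ := by
        rw [← LinearMap.range_eq_top, hσ, Fintype.range_linearCombination, ← hT, eq_top_iff]
        intro z _
        obtain ⟨w, rfl⟩ := hπ z
        rw [hrep]
        exact Submodule.sum_mem _ fun k _ => Submodule.smul_mem _ _ (key1 k)
      exact IH σ hσs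
    · push_neg at hv
      obtain ⟨s, hs⟩ := Module.FinitePresentation.fg_ker π hπ
      set G : Finset R := (s ×ˢ (Finset.univ : Finset (Fin (m + 1)))).image fun q => q.1 q.2
        with hG
      set I : Ideal R := Ideal.span (G : Set R) with hI
      have hIfg : I.FG := ⟨G, rfl⟩
      have hkermem : ∀ v ∈ LinearMap.ker π, ∀ k, v k ∈ I := by
        intro v hvk k
        have : LinearMap.ker π ≤ Submodule.comap (LinearMap.proj k :
            (Fin (m + 1) → R) →ₗ[R] R) I := by
          rw [← hs, Submodule.span_le]
          intro t ht
          exact Submodule.subset_span (Finset.mem_coe.mpr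
            (Finset.mem_image.mpr ⟨(t, k), Finset.mem_product.mpr ⟨ht, Finset.mem_univ _⟩, rfl⟩))
        exact this hvk
      have hIrad : I ≤ J.radical := by
        rw [hI, Ideal.span_le]
        intro a ha
        obtain ⟨q, hq, rfl⟩ := Finset.mem_image.mp ha
        obtain ⟨hq1, -⟩ := Finset.mem_product.mp hq
        have hqker : q.1 ∈ LinearMap.ker π := by
          rw [← hs]; exact Submodule.subset_span hq1
        rcases hrad (q.1 q.2) with h | h
        · exact absurd h (hv q.1 hqker q.2)
        · exact h
      have hex : ∃ N, I ^ N ≤ J := Ideal.exists_pow_le_of_le_radical_of_fg hIrad hIfg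
      set Nm := Nat.find hex with hNm
      have hNmle : I ^ Nm ≤ J := Nat.find_spec hex
      have hNm0 : Nm ≠ 0 := by
        intro h
        rw [h, pow_zero, Ideal.one_eq_top, top_le_iff] at hNmle
        exact hJ hNmle
      have hlt : ¬ I ^ (Nm - 1) ≤ J :=
        Nat.find_min hex (Nat.sub_lt (Nat.pos_of_ne_zero hNm0) one_pos)
      obtain ⟨c, hcI, hcJ⟩ := SetLike.not_le_iff_exists.mp hlt
      set φ₀ : (Fin (m + 1) → R) →ₗ[R] R ⧸ J :=
        J.mkQ ∘ₗ (c • LinearMap.proj 0) with hφ₀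
      have hker : LinearMap.ker π ≤ LinearMap.ker φ₀ := by
        intro v hvk
        have hmem : c * v 0 ∈ J := by
          have : c * v 0 ∈ I ^ (Nm - 1) * I := Ideal.mul_mem_mul hcI (hkermem v hvk 0)
          rw [← pow_succ, Nat.sub_add_cancel (Nat.one_le_iff_ne_zero.mpr hNm0)] at this
          exact hNmle this
        show φ₀ v = 0
        rw [hφ₀]
        simp only [LinearMap.comp_apply, LinearMap.smul_apply, LinearMap.proj_apply,
          Submodule.mkQ_apply]
        rw [smul_eq_mul]
        exact (Submodule.Quotient.mk_eq_zero J).mpr hmem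
      set e := LinearMap.quotKerEquivOfSurjective π hπ with he
      refine ⟨(LinearMap.ker π).liftQ φ₀ hker ∘ₗ e.symm.toLinearMap, ?_⟩
      intro h0
      have hsymm : e.symm (π (Pi.single 0 1)) = Submodule.Quotient.mk (Pi.single 0 1) := by
        rw [LinearEquiv.symm_apply_eq, he]
        simp [LinearMap.quotKerEquivOfSurjective]
      have := LinearMap.congr_fun h0 (π (Pi.single 0 1))
      rw [LinearMap.comp_apply, LinearEquiv.coe_toLinearMap, hsymm, Submodule.liftQ_apply,
        LinearMap.zero_apply] at this
      rw [hφ₀] at this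
      simp only [LinearMap.comp_apply, LinearMap.smul_apply, LinearMap.proj_apply,
        Submodule.mkQ_apply, Pi.single_eq_same, smul_eq_mul, mul_one] at this
      exact hcJ ((Submodule.Quotient.mk_eq_zero J).mp this)

end LocalLemma

section Pull

/-- If the maximal ideal of `A_p` is minimal over the annihilator of an element of a localized
module, then `p` is minimal over the annihilator of some element of the original module. -/
lemma mem_minimalPrimes_of_localized {A : Type} [CommRing A] (p : PrimeSpectrum A)
    {L : Type} [AddCommGroup L] [Module A L]
    {L' : Type} [AddCommGroup L'] [Module A L']
    [Module (Localization.AtPrime p.asIdeal) L']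
    [IsScalarTower A (Localization.AtPrime p.asIdeal) L']
    (f : L →ₗ[A] L') [IsLocalizedModule p.asIdeal.primeCompl f]
    (y' : L')
    (hy' : (IsLocalRing.maximalIdeal (Localization.AtPrime p.asIdeal)) ∈
      (Submodule.span (Localization.AtPrime p.asIdeal) {y'}).annihilator.minimalPrimes) :
    ∃ y : L, p.asIdeal ∈ (Submodule.span A {y}).annihilator.minimalPrimes := by
  set R' := Localization.AtPrime p.asIdeal with hR'
  set S := p.asIdeal.primeCompl with hS
  obtain ⟨⟨y, s⟩, hs⟩ := IsLocalizedModule.surj S f y'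
  refine ⟨y, ?_⟩
  have hannle : (Submodule.span R' {y'}).annihilator ≤ IsLocalRing.maximalIdeal R' := hy'.1.2
  have hprime : p.asIdeal.IsPrime := p.isPrime
  have hcancel : ∀ (t : S) (x : L'), (t : A) • x = 0 → x = 0 := by
    intro t x hx
    have htu : IsUnit (algebraMap A R' (t : A)) := IsLocalization.map_units R' t
    have hx' : (algebraMap A R' (t : A)) • x = 0 := by rwa [algebraMap_smul]
    have hxx : x = ((↑htu.unit⁻¹ : R') * algebraMap A R' (t : A)) • x := by
      rw [IsUnit.val_inv_mul, one_smul]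
    rw [hxx, mul_smul, hx', smul_zero]
  have key0 : ∀ a : A, a • y = 0 → (algebraMap A R' a) • y' = 0 := by
    intro a ha
    have h1 : a • ((s : A) • y') = 0 := by
      rw [← Submonoid.smul_def, hs, ← map_smul, ha, map_zero]
    rw [smul_comm] at h1
    rw [algebraMap_smul]
    exact hcancel s _ h1
  have hJp : (Submodule.span A {y}).annihilator ≤ p.asIdeal := by
    intro a ha
    rw [Submodule.mem_annihilator_span_singleton] at ha
    have h0 : algebraMap A R' a ∈ (Submodule.span R' {y'}).annihilator :=
      (Submodule.mem_annihilator_span_singleton _ _).mpr (key0 a ha)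
    have hm := hannle h0
    have hc := Localization.AtPrime.comap_maximalIdeal (I := p.asIdeal)
    rw [← hc]
    exact hm
  refine ⟨⟨hprime, hJp⟩, ?_⟩
  rintro q ⟨hq, hJq⟩ hqp
  have hd : Disjoint (S : Set A) (q : Set A) := by
    rw [Set.disjoint_left]
    intro t ht htq
    exact ht (hqp htq)
  have hq' : (q.map (algebraMap A R')).IsPrime :=
    IsLocalization.isPrime_of_isPrime_disjoint S R' q hq hd
  have hannq : (Submodule.span R' {y'}).annihilator ≤ q.map (algebraMap A R') := by
    intro b hb
    rw [Submodule.mem_annihilator_span_singleton] at hb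
    obtain ⟨a, t, rfl⟩ := IsLocalization.exists_mk'_eq S b
    have ha : (algebraMap A R' a) • y' = 0 := by
      rw [← IsLocalization.mk'_spec R' a t, mul_comm, mul_smul, hb, smul_zero]
    have hfa : f (a • y) = 0 := by
      rw [map_smul, ← hs, Submonoid.smul_def, smul_comm, ← algebraMap_smul R' a y', ha,
        smul_zero]
    obtain ⟨t', ht'⟩ := (IsLocalizedModule.eq_zero_iff S f).mp hfa
    have hty : ((t' : A) * a) • y = 0 := by
      rw [mul_smul, ← Submonoid.smul_def]
      exact ht'
    have hta : (t' : A) * a ∈ q := hJq ((Submodule.mem_annihilator_span_singleton _ _).mpr hty)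
    have haq : a ∈ q := by
      rcases hq.mem_or_mem hta with h | h
      · exact absurd (hqp h) t'.2
      · exact h
    rw [IsLocalization.mk'_eq_mul_mk'_one]
    exact Ideal.mul_mem_right _ _ (Ideal.mem_map_of_mem _ haq)
  have hq'le : q.map (algebraMap A R') ≤ IsLocalRing.maximalIdeal R' :=
    IsLocalRing.le_maximalIdeal hq'.ne_top
  have hmle := hy'.2 ⟨hq', hannq⟩ hq'le
  intro a hap
  have hm : algebraMap A R' a ∈ IsLocalRing.maximalIdeal R' := by
    rw [← Localization.AtPrime.map_eq_maximalIdeal]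
    exact Ideal.mem_map_of_mem _ hap
  have hmem := hmle hm
  have hcm := IsLocalization.comap_map_of_isPrime_disjoint S R' (I := q) hq hd
  rw [← hcm]
  exact hmem

end Pull

/-- For a finitely presented module `M` and an arbitrary module `N`,
`Ass(Hom_A(M, N)) = Supp(M) ∩ Ass(N)` (weakly associated primes). -/
theorem stmt_9 (A : Type) [CommRing A]
    (M N : Type) [AddCommGroup M] [Module A M] [AddCommGroup N] [Module A N]
    [Module.FinitePresentation A M] :
    weakAssPrimes A (M →ₗ[A] N) = Module.support A M ∩ weakAssPrimes A N := by
  ext p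
  simp only [Set.mem_inter_iff]
  constructor
  · rintro ⟨φ, hφ⟩
    constructor
    · rw [Module.mem_support_iff_of_finite]
      refine le_trans ?_ hφ.1.2
      intro a ha
      rw [Submodule.mem_annihilator_span_singleton]
      ext m
      rw [LinearMap.smul_apply, ← map_smul, Module.mem_annihilator.mp ha m, map_zero,
        LinearMap.zero_apply]
    · obtain ⟨n, s, hsp⟩ := Module.Finite.exists_fin (R := A) (M := M)
      have hI : (Submodule.span A {φ}).annihilator
          = ⨅ i : Fin n, (Submodule.span A {φ (s i)}).annihilator := by
        ext a
        simp only [Submodule.mem_annihilator_span_singleton, Submodule.mem_iInf]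
        constructor
        · intro h i
          rw [← LinearMap.smul_apply, h, LinearMap.zero_apply]
        · intro h
          refine LinearMap.ext_on_range hsp fun i => ?_
          rw [LinearMap.smul_apply, LinearMap.zero_apply]
          exact h i
      rw [hI] at hφ
      have hle : Finset.univ.inf (fun i : Fin n => (Submodule.span A {φ (s i)}).annihilator)
          ≤ p.asIdeal := by
        have h2 := hφ.1.2
        refine le_trans (le_of_eq ?_) h2
        rw [Finset.inf_eq_iInf]
        simp
      obtain ⟨i, -, hi⟩ := (p.isPrime.inf_le').mp hle
      exact ⟨φ (s i), ⟨⟨p.isPrime, hi⟩,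
        fun q hq hqp => hφ.2 ⟨hq.1, le_trans (iInf_le _ i) hq.2⟩ hqp⟩⟩
  · rintro ⟨hsupp, x, hx⟩
    set S := p.asIdeal.primeCompl with hS
    set R' := Localization.AtPrime p.asIdeal with hR'
    haveI hnt : Nontrivial (LocalizedModule S M) := Module.mem_support_iff.mp hsupp
    set M' := LocalizedModule S M with hM'
    set N' := LocalizedModule S N with hN'
    set x' : N' := LocalizedModule.mkLinearMap S N x with hx'
    have hannx : (Submodule.span A {x}).annihilator ≤ p.asIdeal := hx.1.2
    have hx'0 : x' ≠ 0 := by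
      intro h0
      obtain ⟨t, ht⟩ := (IsLocalizedModule.eq_zero_iff S (LocalizedModule.mkLinearMap S N)).mp h0
      have htm : (t : A) ∈ (Submodule.span A {x}).annihilator := by
        rw [Submodule.mem_annihilator_span_singleton, ← Submonoid.smul_def]
        exact ht
      exact t.2 (hannx htm)
    set J : Ideal R' := (Submodule.span R' {x'}).annihilator with hJ
    have hJx : ∀ a : R', (a ∈ J ↔ a • x' = 0) :=
      fun a => Submodule.mem_annihilator_span_singleton x' a
    have hJtop : J ≠ ⊤ := by
      intro h
      apply hx'0
      have h1 : (1 : R') • x' = 0 := (hJx 1).mp (h ▸ Submodule.mem_top)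
      rwa [one_smul] at h1
    have key : ∀ q : Ideal R', q.IsPrime → J ≤ q → IsLocalRing.maximalIdeal R' ≤ q := by
      intro q hq hJq
      set q₀ := q.comap (algebraMap A R') with hq₀
      have hq₀p : q₀.IsPrime := hq.comap _
      have h1 : (Submodule.span A {x}).annihilator ≤ q₀ := by
        intro a ha
        rw [Submodule.mem_annihilator_span_singleton] at ha
        have hax : algebraMap A R' a • x' = 0 := by
          rw [hx', algebraMap_smul, ← map_smul, ha, map_zero]
        exact Ideal.mem_comap.mpr (hJq ((hJx _).mpr hax))
      have h2 : q₀ ≤ p.asIdeal := by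
        intro a ha
        have := IsLocalRing.le_maximalIdeal hq.ne_top (Ideal.mem_comap.mp ha)
        rw [← Localization.AtPrime.comap_maximalIdeal (I := p.asIdeal)]
        exact this
      have h3 : p.asIdeal ≤ q₀ := hx.2 ⟨hq₀p, h1⟩ h2
      rw [← Localization.AtPrime.map_eq_maximalIdeal]
      calc Ideal.map (algebraMap A R') p.asIdeal
          ≤ Ideal.map (algebraMap A R') q₀ := Ideal.map_mono h3
        _ ≤ q := Ideal.map_comap_le
    have hrad : ∀ a : R', IsUnit a ∨ a ∈ J.radical := by
      intro a
      by_cases h : IsUnit a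
      · exact Or.inl h
      · right
        rw [Ideal.radical_eq_sInf]
        apply Submodule.mem_sInf.mpr
        rintro q ⟨hq1, hq2⟩
        exact key q hq2 hq1 h
    obtain ⟨ψ, hψ⟩ := exists_nonzero_hom_quotient (R := R') M' J hJtop hrad
    have hker : J ≤ LinearMap.ker (LinearMap.toSpanSingleton R' N' x') := by
      intro a ha
      rw [LinearMap.mem_ker, LinearMap.toSpanSingleton_apply]
      exact (hJx a).mp ha
    set g : (R' ⧸ J) →ₗ[R'] N' :=
      Submodule.liftQ J (LinearMap.toSpanSingleton R' N' x') hker with hg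
    have hginj : Function.Injective g := by
      rw [← LinearMap.ker_eq_bot, hg, Submodule.ker_liftQ_eq_bot]
      intro a ha
      rw [LinearMap.mem_ker, LinearMap.toSpanSingleton_apply] at ha
      exact (hJx a).mpr ha
    set Φ : M' →ₗ[R'] N' := g ∘ₗ ψ with hΦ
    have hΦ0 : Φ ≠ 0 := by
      intro h0
      apply hψ
      ext z
      have hz := LinearMap.congr_fun h0 z
      rw [hΦ, LinearMap.comp_apply, LinearMap.zero_apply] at hz
      rw [LinearMap.zero_apply]
      exact hginj (by rw [hz, map_zero])
    have hJΦ : J ≤ (Submodule.span R' {Φ}).annihilator := by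
      intro a ha
      rw [Submodule.mem_annihilator_span_singleton]
      ext z
      rw [LinearMap.smul_apply, LinearMap.zero_apply, hΦ, LinearMap.comp_apply]
      obtain ⟨b, hb⟩ := Submodule.Quotient.mk_surjective J (ψ z)
      have hz0 : a • (ψ z) = 0 := by
        rw [← hb, ← Submodule.Quotient.mk_smul]
        refine (Submodule.Quotient.mk_eq_zero J).mpr ?_
        rw [smul_eq_mul]
        exact Ideal.mul_mem_right b J ha
      rw [← map_smul, hz0, map_zero]
    have hmax : IsLocalRing.maximalIdeal R' ∈ (Submodule.span R' {Φ}).annihilator.minimalPrimes := by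
      have hle : (Submodule.span R' {Φ}).annihilator ≤ IsLocalRing.maximalIdeal R' := by
        apply IsLocalRing.le_maximalIdeal
        intro h
        apply hΦ0
        have h1 : (1 : R') • Φ = 0 :=
          (Submodule.mem_annihilator_span_singleton Φ 1).mp (h ▸ Submodule.mem_top)
        rwa [one_smul] at h1
      refine ⟨⟨IsLocalRing.maximalIdeal.isMaximal R' |>.isPrime, hle⟩, ?_⟩
      rintro q ⟨hq, hq2⟩ hqm
      exact key q hq (le_trans hJΦ hq2)
    obtain ⟨φ, hφ⟩ := mem_minimalPrimes_of_localized p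
      (LocalizedModule.map S (M := M) (N := N)) Φ hmax
    exact ⟨φ, hφ⟩
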